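/- Telescoping bound for decreasing chains of finite sets: Let n ≥ 1 be a natural number and let Q₀ ⊇ Q₁ ⊇ ⋯ ⊇ Q_m be a decreasing chain of nonempty finite sets such that for every j ∈ {1,…,m}, either Q_j = Q_{j−1} or |Q_j| ≤ n. Then Σ_{j=1}^m (|Q_{j−1}| − |Q_j|)/|Q_{j−1}| ≤ H(n). -/

import Mathlib

/-- `H n = 1 + 1/2 + ⋯ + 1/n`, the `n`-th harmonic number. -/
noncomputable def H (n : ℕ) : ℝ := ∑ i ∈ Finset.Icc 1 n, (1 : ℝ) / i

lemma H_eq_Ioc (n : ℕ) : H n = ∑ i ∈ Finset.Ioc 0 n, (1 : ℝ) / i := by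
  unfold H
  congr 1

lemma H_one : H 1 = 1 := by simp [H]

lemma H_mono {a b : ℕ} (h : a ≤ b) : H a ≤ H b := by
  unfold H
  apply Finset.sum_le_sum_of_subset_of_nonneg
  · exact Finset.Icc_subset_Icc_right h
  · intro i _ _
    positivity

lemma H_sub {b a : ℕ} (hb : 1 ≤ b) (hba : b ≤ a) :
    ((a : ℝ) - b) / a ≤ H a - H b := by
  have ha : (0 : ℝ) < a := by exact_mod_cast lt_of_lt_of_le hb hba
  have key : H a - H b = ∑ i ∈ Finset.Ioc b a, (1 : ℝ) / i := by
    rw [H_eq_Ioc, H_eq_Ioc, sub_eq_iff_eq_add, add_comm]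
    exact (Finset.sum_Ioc_consecutive _ (Nat.zero_le b) hba).symm
  rw [key]
  have hcard : (Finset.Ioc b a).card = a - b := Nat.card_Ioc b a
  have hbd : (Finset.Ioc b a).card • ((1 : ℝ) / a) ≤ ∑ i ∈ Finset.Ioc b a, (1 : ℝ) / i := by
    apply Finset.card_nsmul_le_sum
    intro x hx
    simp only [Finset.mem_Ioc] at hx
    have hxpos : (0 : ℝ) < x := by
      have : 0 < x := by omega
      exact_mod_cast this
    apply div_le_div_of_nonneg_left (by norm_num) hxpos
    exact_mod_cast hx.2
  calc ((a : ℝ) - b) / a = ((a - b : ℕ) : ℝ) * (1 / a) := by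
        push_cast [hba]; ring
    _ = (Finset.Ioc b a).card • ((1 : ℝ) / a) := by rw [hcard, nsmul_eq_mul]
    _ ≤ _ := hbd

/-- Potential function. -/
noncomputable def psi (n x : ℕ) : ℝ := if x ≤ n then H x else H n + 1 - n / x

lemma psi_le (n x : ℕ) : psi n x ≤ H n + 1 := by
  unfold psi
  split
  · have := H_mono (by assumption : x ≤ n); linarith
  · have hx : (0 : ℝ) ≤ (n : ℝ) / x := by positivity
    linarith

lemma one_le_psi {n x : ℕ} (hn : 1 ≤ n) (hx : 1 ≤ x) : 1 ≤ psi n x := by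
  unfold psi
  split
  · have := H_mono hx; rw [H_one] at this; linarith
  · rename_i h
    push_neg at h
    have hxpos : (0 : ℝ) < x := by exact_mod_cast lt_of_lt_of_le hx le_rfl
    have : (n : ℝ) / x ≤ 1 := by
      rw [div_le_one hxpos]; exact_mod_cast (le_of_lt h)
    have := H_mono hn; rw [H_one] at this; linarith

lemma psi_step {n b a : ℕ} (hn : 1 ≤ n) (hb : 1 ≤ b) (hba : b ≤ a)
    (hd : b = a ∨ b ≤ n) : ((a : ℝ) - b) / a ≤ psi n a - psi n b := by
  rcases hd with rfl | hbn
  · simp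
  · unfold psi
    rw [if_pos hbn]
    split
    · exact H_sub hb hba
    · rename_i h
      push_neg at h
      have hna : n ≤ a := le_of_lt h
      have hHn : ((n : ℝ) - b) / n ≤ H n - H b := H_sub hb hbn
      have hnpos : (0 : ℝ) < n := by exact_mod_cast hn
      have hapos : (0 : ℝ) < a := by exact_mod_cast lt_of_lt_of_le hn hna
      have h1 : ((n : ℝ) - b) / a ≤ ((n : ℝ) - b) / n := by
        apply div_le_div_of_nonneg_left _ hnpos _
        · have : (b : ℝ) ≤ n := by exact_mod_cast hbn
          linarith
        · exact_mod_cast hna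
      have h2 : ((a : ℝ) - b) / a = ((n : ℝ) - b) / a + (1 - n / a) := by
        field_simp
        ring
      rw [h2]
      have h3 : ((n : ℝ) - b) / a ≤ H n - H b := le_trans h1 hHn
      linarith

lemma tele {U : Type*} (n : ℕ) (hn : 1 ≤ n) (Q : ℕ → Finset U) :
    ∀ m, (∀ j, j ≤ m → (Q j).Nonempty) →
    (∀ j, 1 ≤ j → j ≤ m → Q j ⊆ Q (j - 1)) →
    (∀ j, 1 ≤ j → j ≤ m → Q j = Q (j - 1) ∨ (Q j).card ≤ n) →
    ∑ j ∈ Finset.Icc 1 m,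
        (((Q (j - 1)).card : ℝ) - ((Q j).card : ℝ)) / ((Q (j - 1)).card : ℝ)
      ≤ psi n (Q 0).card - psi n (Q m).card := by
  intro m
  induction m with
  | zero => intro _ _ _; simp
  | succ m ih =>
    intro hne hmono hdich
    have ih' := ih (fun j hj => hne j (by omega)) (fun j h1 h2 => hmono j h1 (by omega))
      (fun j h1 h2 => hdich j h1 (by omega))
    rw [Finset.sum_Icc_succ_top (by omega : 1 ≤ m + 1)]
    have hsub := hmono (m + 1) (by omega) le_rfl
    simp only [Nat.add_sub_cancel] at hsub
    have hcard : (Q (m + 1)).card ≤ (Q m).card := Finset.card_le_card hsub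
    have hb : 1 ≤ (Q (m + 1)).card := Finset.card_pos.mpr (hne (m + 1) le_rfl)
    have hd : (Q (m + 1)).card = (Q m).card ∨ (Q (m + 1)).card ≤ n := by
      rcases hdich (m + 1) (by omega) le_rfl with h | h
      · left; simp only [Nat.add_sub_cancel] at h; rw [h]
      · right; exact h
    have hstep := psi_step hn hb hcard hd
    simp only [Nat.add_sub_cancel]
    linarith

/-- Telescoping bound for decreasing chains of finite sets: if
`Q₀ ⊇ Q₁ ⊇ ⋯ ⊇ Q_m` is a decreasing chain of nonempty finite sets such that for every
`j ∈ {1,…,m}` either `Q_j = Q_{j-1}` or `|Q_j| ≤ n` (where `n ≥ 1`), then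
`Σ_{j=1}^m (|Q_{j-1}| - |Q_j|)/|Q_{j-1}| ≤ H(n)`. -/
theorem telescoping_chain_bound {U : Type*} (n m : ℕ) (hn : 1 ≤ n)
    (Q : ℕ → Finset U)
    (hne : ∀ j, j ≤ m → (Q j).Nonempty)
    (hmono : ∀ j, 1 ≤ j → j ≤ m → Q j ⊆ Q (j - 1))
    (hdich : ∀ j, 1 ≤ j → j ≤ m → Q j = Q (j - 1) ∨ (Q j).card ≤ n) :
    ∑ j ∈ Finset.Icc 1 m,
        (((Q (j - 1)).card : ℝ) - ((Q j).card : ℝ)) / ((Q (j - 1)).card : ℝ) ≤ H n := by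
  have h := tele n hn Q m hne hmono hdich
  have h1 := psi_le n (Q 0).card
  have h2 := one_le_psi hn (Finset.card_pos.mpr (hne m le_rfl))
  linarith
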